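/- There exists a set of conditions including an exponent equal to 1 for which the local-surgery algorithm fails: with T = {0,1} and L = {H^1_0, H^2_1, V^2_1}, the tiling of G_{4,3} given by rows (1,0,1,1), (0,1,0,1), (1,1,0,0) (top to bottom) cannot be rectified by the algorithm; indeed, no L-dappled tiling agrees with this tiling on all cells of weight < some critical weight where the algorithm gets stuck. More concretely: there is no assignment of values at a violating cell and its two surgery neighbors resolving the violation without introducing a violation at a cell of weight ≤ the violating cell's weight. -/
import Mathlib


/-- `L`-dappled for `L = {H^1_0, H^2_1, V^2_1}` on `G_{4,3}`. -/
def Dappled9 (f : ℕ → ℕ → Fin 2) : Prop :=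
  ∀ i < 4, ∀ j < 3,
    ¬(1 ≤ i ∧ f i j = 0 ∧ f (i-1) j = 0) ∧
    ¬(2 ≤ i ∧ f i j = 1 ∧ f (i-1) j = 1 ∧ f (i-2) j = 1) ∧
    ¬(2 ≤ j ∧ f i j = 1 ∧ f i (j-1) = 1 ∧ f i (j-2) = 1)

/-- The tiling of `G_{4,3}` with rows `(1,0,1,1)`, `(0,1,0,1)`, `(1,1,0,0)`. -/
def f9 : ℕ → ℕ → Fin 2 := fun i j =>
  if j = 0 then (if i = 1 then 0 else 1)
  else if j = 1 then (if i = 0 ∨ i = 2 then 0 else 1)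
  else (if i ≤ 1 then 1 else 0)

lemma fin2cases (a : Fin 2) : a = 0 ∨ a = 1 := by fin_cases a <;> simp

/-- The algorithm gets stuck on `f9` for `L = {H^1_0, H^2_1, V^2_1}`: no
`L`-dappled tiling agrees with `f9` on all cells of weight `< 5` (the weight of
the unique violating cell `(3,2)`), and no modification of `f9` at the
violating cell `(3,2)` and its two surgery neighbours `(2,2)`, `(3,1)` yields
an `L`-dappled tiling. -/
theorem stmt9 :
    (¬ ∃ g : ℕ → ℕ → Fin 2, Dappled9 g ∧
      ∀ i j, i < 4 → j < 3 → i + j < 5 → g i j = f9 i j) ∧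
    (¬ ∃ g : ℕ → ℕ → Fin 2, Dappled9 g ∧
      ∀ i j, (i, j) ≠ (3, 2) → (i, j) ≠ (2, 2) → (i, j) ≠ (3, 1) →
        g i j = f9 i j) := by
  constructor
  · rintro ⟨g, hd, ha⟩
    have e22 : g 2 2 = 0 := by rw [ha 2 2 (by norm_num) (by norm_num) (by norm_num)]; rfl
    have e31 : g 3 1 = 1 := by rw [ha 3 1 (by norm_num) (by norm_num) (by norm_num)]; rfl
    have e30 : g 3 0 = 1 := by rw [ha 3 0 (by norm_num) (by norm_num) (by norm_num)]; rfl
    have h := hd 3 (by norm_num) 2 (by norm_num)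
    rcases fin2cases (g 3 2) with h32 | h32
    · exact h.1 ⟨by norm_num, h32, e22⟩
    · exact h.2.2 ⟨by norm_num, h32, e31, e30⟩
  · rintro ⟨g, hd, ha⟩
    have e21 : g 2 1 = 0 := by rw [ha 2 1 (by simp) (by simp) (by simp)]; rfl
    have e30 : g 3 0 = 1 := by rw [ha 3 0 (by simp) (by simp) (by simp)]; rfl
    have e12 : g 1 2 = 1 := by rw [ha 1 2 (by simp) (by simp) (by simp)]; rfl
    have e02 : g 0 2 = 1 := by rw [ha 0 2 (by simp) (by simp) (by simp)]; rfl
    have e31 : g 3 1 = 1 := by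
      rcases fin2cases (g 3 1) with h | h
      · exact absurd ⟨by norm_num, h, e21⟩ (hd 3 (by norm_num) 1 (by norm_num)).1
      · exact h
    have e22 : g 2 2 = 0 := by
      rcases fin2cases (g 2 2) with h | h
      · exact h
      · exact absurd ⟨by norm_num, h, e12, e02⟩ (hd 2 (by norm_num) 2 (by norm_num)).2.1
    have h := hd 3 (by norm_num) 2 (by norm_num)
    rcases fin2cases (g 3 2) with h32 | h32
    · exact h.1 ⟨by norm_num, h32, e22⟩
    · exact h.2.2 ⟨by norm_num, h32, e31, e30⟩
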